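/- Transversality of graphs over a center coordinate: Let Ω ⊂ ℝ^k × ℝ^c be open, let f, g : Ω → ℝ^k be differentiable at (x₀,z₀) ∈ Ω with f(x₀,z₀) = g(x₀,z₀), and suppose that the partial derivative in the x-direction of f − g at (x₀,z₀), i.e. the linear map ξ ↦ D(f−g)(x₀,z₀)(ξ,0) on ℝ^k, is invertible. Consider the graphs W = {(x, f(x,z), z) : (x,z) ∈ Ω} and V = {(x, g(x,z), z) : (x,z) ∈ Ω} in ℝ^k × ℝ^k × ℝ^c, and the tangent spaces at p = (x₀, f(x₀,z₀), z₀): T_p W = {(ξ, Df(x₀,z₀)(ξ,ζ), ζ) : (ξ,ζ) ∈ ℝ^k × ℝ^c} and T_p V = {(ξ, Dg(x₀,z₀)(ξ,ζ), ζ) : (ξ,ζ) ∈ ℝ^k × ℝ^c}. Then T_p W + T_p V = ℝ^k × ℝ^k × ℝ^c. -/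
import Mathlib


open Set

/-- **Transversality of graphs over a center coordinate.**
If `f, g : Ω → ℝ^k` are differentiable at `p₀ = (x₀,z₀)` with `f p₀ = g p₀` and the
`x`-partial derivative of `f - g` at `p₀` is invertible, then the tangent spaces at
`p = (x₀, f p₀, z₀)` of the graphs `W = {(x, f(x,z), z)}` and `V = {(x, g(x,z), z)}`
together span `ℝ^k × ℝ^k × ℝ^c`. -/
theorem transversality_of_graphs_over_center_coordinate
    (k c : ℕ)
    (Ω : Set ((Fin k → ℝ) × (Fin c → ℝ))) (hΩ : IsOpen Ω)
    (f g : (Fin k → ℝ) × (Fin c → ℝ) → Fin k → ℝ)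
    (p₀ : (Fin k → ℝ) × (Fin c → ℝ)) (hp₀ : p₀ ∈ Ω)
    (hf : DifferentiableAt ℝ f p₀) (hg : DifferentiableAt ℝ g p₀)
    (hfg : f p₀ = g p₀)
    (hinv : Function.Bijective
      (fun ξ : Fin k → ℝ => fderiv ℝ (fun q => f q - g q) p₀ (ξ, 0))) :
    ∀ (a b : Fin k → ℝ) (d : Fin c → ℝ),
      ∃ (ξ₁ ξ₂ : Fin k → ℝ) (ζ₁ ζ₂ : Fin c → ℝ),
        ξ₁ + ξ₂ = a ∧
        fderiv ℝ f p₀ (ξ₁, ζ₁) + fderiv ℝ g p₀ (ξ₂, ζ₂) = b ∧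
        ζ₁ + ζ₂ = d := by
  intro a b d
  have hsub : fderiv ℝ (fun q => f q - g q) p₀ = fderiv ℝ f p₀ - fderiv ℝ g p₀ :=
    fderiv_sub hf hg
  obtain ⟨ξ₁, hξ₁⟩ := hinv.2 (b - fderiv ℝ f p₀ (0, d) - fderiv ℝ g p₀ (a, 0))
  refine ⟨ξ₁, a - ξ₁, d, 0, by abel, ?_, by simp⟩
  have h1 : ((ξ₁, d) : (Fin k → ℝ) × (Fin c → ℝ)) = (ξ₁, 0) + (0, d) := by simp
  have h2 : ((a - ξ₁, (0 : Fin c → ℝ)) : (Fin k → ℝ) × (Fin c → ℝ))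
      = (a, 0) - (ξ₁, 0) := by
    simp [Prod.ext_iff]
  rw [h1, h2, map_add, map_sub]
  simp only [hsub, ContinuousLinearMap.sub_apply] at hξ₁
  linear_combination hξ₁
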